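/- Let C and D be cartesian categories, let Σ_D ⊣ D* be an adjunction with Σ_D : D ⥤ C, let X be an object of C, and let L ⊣ R be an adjunction with L : C/X ⥤ D that is over C, i.e., there is a natural isomorphism Σ_D ∘ L ≅ Σ_X where Σ_X : C/X ⥤ C is the forgetful (domain) functor, and suppose L ⊣ R is Frobenius at the object D*(X) of D. If W is an object of D for which the unique morphism !_W : W ⟶ 1 is an effective descent morphism, then the structure morphism of the object R(W) of C/X, namely the morphism (R W).hom from the domain of R W to X in C, is an effective descent morphism of C. -/

import Mathlib

open CategoryTheory Limits

universe v₁ v₂ v₃ u₁ u₂ u₃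

/-- An adjunction `L ⊣ R` (with `L : E ⥤ D`) is Frobenius at an object `X` of `D` if for every
`g : W ⟶ R X` and `f : Y ⟶ X` the canonical morphism `L (W ×_{R X} R Y) ⟶ L W ×_X Y`, with
components `L π₁` and `ε_Y ∘ L π₂`, into the pullback of `f` along the adjoint transpose
`ε_X ∘ L g` of `g`, is an isomorphism. -/
def FrobeniusAt {E : Type u₁} [Category.{v₁} E] {D : Type u₂} [Category.{v₂} D]
    [HasFiniteLimits E] [HasFiniteLimits D]
    {L : E ⥤ D} {R : D ⥤ E} (adj : L ⊣ R) (X : D) : Prop :=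
  ∀ (W : E) (g : W ⟶ R.obj X) (Y : D) (f : Y ⟶ X),
    IsIso (pullback.lift (L.map (pullback.fst g (R.map f)))
      (L.map (pullback.snd g (R.map f)) ≫ adj.counit.app Y)
        (by rw [← L.map_comp_assoc, pullback.condition, L.map_comp_assoc]; simp) :
      L.obj (pullback g (R.map f)) ⟶ pullback (L.map g ≫ adj.counit.app X) f)

/-- A morphism `f : X ⟶ Y` of a cartesian category is an effective descent morphism if the
pullback functor `f* : C/Y ⥤ C/X` is monadic. -/
def EffectiveDescentMorphism {C : Type u₁} [Category.{v₁} C] [HasFiniteLimits C]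
    {X Y : C} (f : X ⟶ Y) : Prop :=
  Nonempty (MonadicRightAdjoint (Over.pullback f))

set_option linter.unusedSectionVars false
set_option linter.unnecessarySimpa false
set_option linter.unusedVariables false

namespace FrobeniusDescentInternal


variable {C : Type u₁} [Category.{v₁} C] {T : Type u₂} [Category.{v₂} T]

lemma overIsIso {X : C} {U V : Over X} (m : U ⟶ V) (h : IsIso m.left) : IsIso m := by
  refine ⟨⟨Over.homMk (inv m.left) (by rw [← Over.w m, IsIso.inv_hom_id_assoc]), ?_, ?_⟩⟩ <;>
    · apply Over.OverMorphism.ext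
      simp

lemma isPullback_over {X : C} {P A B Z : Over X} {fst : P ⟶ A} {snd : P ⟶ B}
    {f : A ⟶ Z} {g : B ⟶ Z} (w : fst ≫ f = snd ≫ g)
    (h : IsPullback fst.left snd.left f.left g.left) : IsPullback fst snd f g := by
  refine IsPullback.of_isLimit' ⟨w⟩ ?_
  refine PullbackCone.IsLimit.mk _ (fun s => Over.homMk
      (h.lift s.fst.left s.snd.left (by rw [← Over.comp_left, s.condition, Over.comp_left]))
      (by rw [← Over.w fst, ← Category.assoc, h.lift_fst, Over.w s.fst])) ?_ ?_ ?_
  · intro s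
    apply Over.OverMorphism.ext
    simpa using h.lift_fst _ _ _
  · intro s
    apply Over.OverMorphism.ext
    simpa using h.lift_snd _ _ _
  · intro s m hm₁ hm₂
    apply Over.OverMorphism.ext
    refine h.hom_ext ?_ ?_
    · simpa using congrArg CommaMorphism.left hm₁
    · simpa using congrArg CommaMorphism.left hm₂

lemma hasSplitCoequalizer_of_natIso {F G : C ⥤ T} (e : F ≅ G) {A B : C} (u v : A ⟶ B)
    [hs : HasSplitCoequalizer (F.map u) (F.map v)] :
    HasSplitCoequalizer (G.map u) (G.map v) := by
  obtain ⟨Z, π, ⟨q⟩⟩ := hs.splittable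
  refine ⟨⟨Z, e.inv.app B ≫ π, ⟨{
    rightSection := q.rightSection ≫ e.hom.app B
    leftSection := e.inv.app B ≫ q.leftSection ≫ e.hom.app A
    condition := by
      rw [← NatIso.naturality_1 e u, ← NatIso.naturality_1 e v]
      simp [q.condition_assoc]
      simp [← Category.assoc, q.condition]
    rightSection_π := by simp [q.rightSection_π]
    leftSection_bottom := by
      rw [Category.assoc, Category.assoc, ← e.hom.naturality v,
        q.leftSection_bottom_assoc, Iso.inv_hom_id_app]
    leftSection_top := by
      rw [Category.assoc, Category.assoc, ← e.hom.naturality u,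
        q.leftSection_top_assoc, Category.assoc]
  }⟩⟩⟩

lemma monadicReflectsIsos (Rf : T ⥤ C) [MonadicRightAdjoint Rf] : Rf.ReflectsIsomorphisms := by
  constructor
  intro A B m hm
  rw [← NatIso.isIso_map_iff (Monad.comparisonForget (monadicAdjunction Rf)) m] at hm
  have hm' : IsIso ((monadicAdjunction Rf).toMonad.forget.map
      ((Monad.comparison (monadicAdjunction Rf)).map m)) := hm
  have h2 : IsIso ((Monad.comparison (monadicAdjunction Rf)).map m) :=
    isIso_of_reflects_iso _ ((monadicAdjunction Rf).toMonad.forget)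
  exact isIso_of_reflects_iso m (Monad.comparison (monadicAdjunction Rf))

@[simps]
noncomputable def toOverTerminal (T : Type u₂) [Category.{v₂} T] [HasTerminal T] : T ⥤ Over (⊤_ T) where
  obj Y := Over.mk (terminal.from Y)
  map h := Over.homMk h (terminal.comp_from h)

noncomputable def equivOverTerminal (T : Type u₂) [Category.{v₂} T] [HasTerminal T] : T ≌ Over (⊤_ T) where
  functor := toOverTerminal T
  inverse := Over.forget _
  unitIso := NatIso.ofComponents (fun Y => Iso.refl _) (by intro X Y f; exact (Category.comp_id f).trans (Category.id_comp f).symm)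
  counitIso := NatIso.ofComponents
    (fun V => Over.isoMk (Iso.refl _) (terminal.hom_ext _ _)) (by
      intro U V m
      apply Over.OverMorphism.ext
      exact (Category.comp_id m.left).trans (Category.id_comp m.left).symm)
  functor_unitIso_comp := by
    intro Y
    apply Over.OverMorphism.ext
    exact Category.comp_id (𝟙 Y)


section Main

variable {C : Type u₁} [Category.{v₁} C] {D : Type u₂} [Category.{v₂} D]
    [HasFiniteLimits C] [HasFiniteLimits D]
    {SigD : D ⥤ C} {Dstar : C ⥤ D} {X : C}
    {L : Over X ⥤ D} {R : D ⥤ Over X}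

/-- canonical morphism `L B ⟶ Dstar X`. -/
noncomputable def tmap (adjD : SigD ⊣ Dstar) (adj : L ⊣ R) (ov : L ⋙ SigD ≅ Over.forget X)
    (B : Over X) : L.obj B ⟶ Dstar.obj X :=
  (adjD.homEquiv _ _) (ov.hom.app B ≫ B.hom)

lemma tmap_natural (adjD : SigD ⊣ Dstar) (adj : L ⊣ R) (ov : L ⋙ SigD ≅ Over.forget X) {B B' : Over X} (h : B ⟶ B') :
    L.map h ≫ tmap adjD adj ov B' = tmap adjD adj ov B := by
  dsimp [tmap]
  rw [← Adjunction.homEquiv_naturality_left]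
  congr 1
  erw [← Category.assoc]
  have := ov.hom.naturality h
  dsimp at this
  erw [this, Category.assoc, Over.w]

/-- canonical morphism `B ⟶ R (Dstar X)` in `Over X`. -/
noncomputable def tau (adjD : SigD ⊣ Dstar) (adj : L ⊣ R) (ov : L ⋙ SigD ≅ Over.forget X) (B : Over X) : B ⟶ R.obj (Dstar.obj X) :=
  (adj.homEquiv B (Dstar.obj X)) (tmap adjD adj ov B)

lemma tau_natural (adjD : SigD ⊣ Dstar) (adj : L ⊣ R) (ov : L ⋙ SigD ≅ Over.forget X) {B B' : Over X} (h : B ⟶ B') :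
    h ≫ tau adjD adj ov B' = tau adjD adj ov B := by
  dsimp [tau]
  rw [← Adjunction.homEquiv_naturality_left, tmap_natural]

lemma L_tau_counit (adjD : SigD ⊣ Dstar) (adj : L ⊣ R) (ov : L ⋙ SigD ≅ Over.forget X) (B : Over X) :
    L.map (tau adjD adj ov B) ≫ adj.counit.app (Dstar.obj X) = tmap adjD adj ov B := by
  have := (adj.homEquiv B (Dstar.obj X)).symm_apply_apply (tmap adjD adj ov B)
  rwa [Adjunction.homEquiv_counit] at this

/-- auxiliary object `W ×(⊤) Dstar X` -/
noncomputable def Y0 (adjD : SigD ⊣ Dstar) (adj : L ⊣ R) (ov : L ⋙ SigD ≅ Over.forget X) (W : D) : D := pullback (terminal.from W) (terminal.from (Dstar.obj X))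

noncomputable def w0 (adjD : SigD ⊣ Dstar) (adj : L ⊣ R) (ov : L ⋙ SigD ≅ Over.forget X) (W : D) : Y0 adjD adj ov W ⟶ W := pullback.fst _ _
noncomputable def f0 (adjD : SigD ⊣ Dstar) (adj : L ⊣ R) (ov : L ⋙ SigD ≅ Over.forget X) (W : D) : Y0 adjD adj ov W ⟶ Dstar.obj X := pullback.snd _ _

/-- `R` applied to the defining square of `Y0` is a pullback over `Over.mk (𝟙 X)`. -/
lemma sqE (adjD : SigD ⊣ Dstar) (adj : L ⊣ R) (ov : L ⋙ SigD ≅ Over.forget X) (W : D) : IsPullback (R.map (w0 adjD adj ov W)) (R.map (f0 adjD adj ov W))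
    ((Over.mkIdTerminal (X := X)).from (R.obj W))
    ((Over.mkIdTerminal (X := X)).from (R.obj (Dstar.obj X))) := by
  letI := adj.rightAdjoint_preservesLimits
  have s0 := IsPullback.of_hasPullback (terminal.from W) (terminal.from (Dstar.obj X))
  have s1 := R.map_isPullback s0
  have ht : IsTerminal (R.obj (⊤_ D)) := IsTerminal.isTerminalObj R _ terminalIsTerminal
  exact s1.of_iso (Iso.refl _) (Iso.refl _) (Iso.refl _)
    (ht.uniqueUpToIso (Over.mkIdTerminal (X := X))) (by simp [w0]; exact (Category.id_comp _).symm) (by simp [f0]; exact (Category.id_comp _).symm)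
    ((Over.mkIdTerminal (X := X)).hom_ext _ _) ((Over.mkIdTerminal (X := X)).hom_ext _ _)

/-- the object `B ×_X A` of `Over X`, with structure map through the second projection. -/
noncomputable def ZB (adjD : SigD ⊣ Dstar) (adj : L ⊣ R) (ov : L ⋙ SigD ≅ Over.forget X) (W : D) (B : Over X) : Over X :=
  Over.mk (pullback.snd B.hom (R.obj W).hom ≫ (R.obj W).hom)

noncomputable def aB (adjD : SigD ⊣ Dstar) (adj : L ⊣ R) (ov : L ⋙ SigD ≅ Over.forget X) (W : D) (B : Over X) : ZB adjD adj ov W B ⟶ B :=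
  Over.homMk (pullback.fst B.hom (R.obj W).hom) (by
    simp [ZB, pullback.condition])

noncomputable def sB (adjD : SigD ⊣ Dstar) (adj : L ⊣ R) (ov : L ⋙ SigD ≅ Over.forget X) (W : D) (B : Over X) : ZB adjD adj ov W B ⟶ R.obj W :=
  Over.homMk (pullback.snd B.hom (R.obj W).hom) rfl

lemma sliceSq (adjD : SigD ⊣ Dstar) (adj : L ⊣ R) (ov : L ⋙ SigD ≅ Over.forget X) (W : D) (B : Over X) : IsPullback (aB adjD adj ov W B) (sB adjD adj ov W B)
    ((Over.mkIdTerminal (X := X)).from B) ((Over.mkIdTerminal (X := X)).from (R.obj W)) := by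
  refine isPullback_over ((Over.mkIdTerminal (X := X)).hom_ext _ _) ?_
  have e1 : ((Over.mkIdTerminal (X := X)).from B).left = B.hom := by
    simpa using Over.w ((Over.mkIdTerminal (X := X)).from B)
  have e2 : ((Over.mkIdTerminal (X := X)).from (R.obj W)).left = (R.obj W).hom := by
    simpa using Over.w ((Over.mkIdTerminal (X := X)).from (R.obj W))
  rw [e1, e2]
  exact IsPullback.of_hasPullback B.hom (R.obj W).hom

noncomputable def bB (adjD : SigD ⊣ Dstar) (adj : L ⊣ R) (ov : L ⋙ SigD ≅ Over.forget X) (W : D) (B : Over X) : ZB adjD adj ov W B ⟶ R.obj (Y0 adjD adj ov W) :=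
  (sqE adjD adj ov W).lift (sB adjD adj ov W B) (aB adjD adj ov W B ≫ tau adjD adj ov B)
    ((Over.mkIdTerminal (X := X)).hom_ext _ _)

lemma bigSq (adjD : SigD ⊣ Dstar) (adj : L ⊣ R) (ov : L ⋙ SigD ≅ Over.forget X) (W : D) (B : Over X) : IsPullback (aB adjD adj ov W B) (bB adjD adj ov W B)
    (tau adjD adj ov B) (R.map (f0 adjD adj ov W)) := by
  have hs := sliceSq adjD adj ov W B
  rw [show sB adjD adj ov W B = bB adjD adj ov W B ≫ R.map (w0 adjD adj ov W) from
    ((sqE adjD adj ov W).lift_fst _ _ _).symm] at hs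
  rw [show (Over.mkIdTerminal (X := X)).from B =
      tau adjD adj ov B ≫ (Over.mkIdTerminal (X := X)).from (R.obj (Dstar.obj X)) from
    (Over.mkIdTerminal (X := X)).hom_ext _ _] at hs
  exact IsPullback.of_bot hs ((sqE adjD adj ov W).lift_snd _ _ _).symm (sqE adjD adj ov W).flip

/-- the right-hand pullback square in `D`. -/
lemma sqD (adjD : SigD ⊣ Dstar) (adj : L ⊣ R) (ov : L ⋙ SigD ≅ Over.forget X) (W : D) (B : Over X) : IsPullback (pullback.fst (tmap adjD adj ov B) (f0 adjD adj ov W))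
    (pullback.snd (tmap adjD adj ov B) (f0 adjD adj ov W) ≫ w0 adjD adj ov W)
    (terminal.from (L.obj B)) (terminal.from W) := by
  have h1 := (IsPullback.of_hasPullback (tmap adjD adj ov B) (f0 adjD adj ov W)).paste_vert
    (IsPullback.of_hasPullback (terminal.from W) (terminal.from (Dstar.obj X))).flip
  rwa [terminal.comp_from] at h1

/-- The comparison morphism from the Frobenius condition. -/
noncomputable def kappa (adjD : SigD ⊣ Dstar) (adj : L ⊣ R) (ov : L ⋙ SigD ≅ Over.forget X)
    (W : D) (B : Over X) :
    L.obj (pullback (tau adjD adj ov B) (R.map (f0 adjD adj ov W))) ⟶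
      pullback (L.map (tau adjD adj ov B) ≫ adj.counit.app (Dstar.obj X)) (f0 adjD adj ov W) :=
  pullback.lift (L.map (pullback.fst _ _)) (L.map (pullback.snd _ _) ≫ adj.counit.app _)
    (by rw [← L.map_comp_assoc, pullback.condition, L.map_comp_assoc]; simp)

noncomputable def phi (adjD : SigD ⊣ Dstar) (adj : L ⊣ R) (ov : L ⋙ SigD ≅ Over.forget X)
    (W : D) (frob : FrobeniusAt adj (Dstar.obj X)) (B : Over X) :
    L.obj (ZB adjD adj ov W B) ≅ pullback (terminal.from (L.obj B)) (terminal.from W) :=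
  letI : IsIso (kappa adjD adj ov W B) :=
    frob B (tau adjD adj ov B) (Y0 adjD adj ov W) (f0 adjD adj ov W)
  L.mapIso (bigSq adjD adj ov W B).isoPullback ≪≫ asIso (kappa adjD adj ov W B) ≪≫
    pullback.congrHom (L_tau_counit adjD adj ov B) rfl ≪≫ (sqD adjD adj ov W B).isoPullback

lemma phi_fst (adjD : SigD ⊣ Dstar) (adj : L ⊣ R) (ov : L ⋙ SigD ≅ Over.forget X)
    (W : D) (frob : FrobeniusAt adj (Dstar.obj X)) (B : Over X) :
    (phi adjD adj ov W frob B).hom ≫ pullback.fst (terminal.from (L.obj B)) (terminal.from W) =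
      L.map (aB adjD adj ov W B) := by
  dsimp only [phi, Iso.trans_hom, Functor.mapIso_hom, asIso_hom]
  simp only [Category.assoc]
  rw [(sqD adjD adj ov W B).isoPullback_hom_fst, pullback.congrHom_hom]
  erw [pullback.lift_fst, Category.comp_id]
  dsimp only [kappa]
  erw [pullback.lift_fst]
  rw [← L.map_comp, (bigSq adjD adj ov W B).isoPullback_hom_fst]

lemma phi_snd (adjD : SigD ⊣ Dstar) (adj : L ⊣ R) (ov : L ⋙ SigD ≅ Over.forget X)
    (W : D) (frob : FrobeniusAt adj (Dstar.obj X)) (B : Over X) :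
    (phi adjD adj ov W frob B).hom ≫ pullback.snd (terminal.from (L.obj B)) (terminal.from W) =
      L.map (sB adjD adj ov W B) ≫ adj.counit.app W := by
  dsimp only [phi, Iso.trans_hom, Functor.mapIso_hom, asIso_hom]
  simp only [Category.assoc]
  rw [(sqD adjD adj ov W B).isoPullback_hom_snd, pullback.congrHom_hom]
  erw [pullback.lift_snd_assoc, Category.comp_id]
  dsimp only [kappa]
  erw [pullback.lift_snd_assoc, Category.assoc]
  rw [← adj.counit_naturality (w0 adjD adj ov W), ← Category.assoc, ← Category.assoc,
    ← L.map_comp, ← L.map_comp, (bigSq adjD adj ov W B).isoPullback_hom_snd]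
  congr 2
  exact (sqE adjD adj ov W).lift_fst _ _ _

/-- sliced comparison functor `Over A ⥤ Over W`. -/
noncomputable def Lam (adjD : SigD ⊣ Dstar) (adj : L ⊣ R) (ov : L ⋙ SigD ≅ Over.forget X)
    (W : D) : Over ((R.obj W).left) ⥤ Over W :=
  (R.obj W).iteratedSliceBackward ⋙ Over.post L ⋙ Over.map (adj.counit.app W)

noncomputable def G2 (adjD : SigD ⊣ Dstar) (adj : L ⊣ R) (ov : L ⋙ SigD ≅ Over.forget X)
    (W : D) : D ⥤ Over W :=
  (equivOverTerminal D).functor ⋙ Over.pullback (terminal.from W)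

noncomputable def zmap (adjD : SigD ⊣ Dstar) (adj : L ⊣ R) (ov : L ⋙ SigD ≅ Over.forget X)
    (W : D) {B B' : Over X} (h : B ⟶ B') : ZB adjD adj ov W B ⟶ ZB adjD adj ov W B' :=
  Over.homMk ((Over.pullback (R.obj W).hom).map h).left (by simp [ZB, pullback.lift_snd_assoc])

lemma zmap_aB (adjD : SigD ⊣ Dstar) (adj : L ⊣ R) (ov : L ⋙ SigD ≅ Over.forget X)
    (W : D) {B B' : Over X} (h : B ⟶ B') :
    zmap adjD adj ov W h ≫ aB adjD adj ov W B' = aB adjD adj ov W B ≫ h := by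
  apply Over.OverMorphism.ext
  exact pullback.lift_fst _ _ _

lemma zmap_sB (adjD : SigD ⊣ Dstar) (adj : L ⊣ R) (ov : L ⋙ SigD ≅ Over.forget X)
    (W : D) {B B' : Over X} (h : B ⟶ B') :
    zmap adjD adj ov W h ≫ sB adjD adj ov W B' = sB adjD adj ov W B := by
  apply Over.OverMorphism.ext
  exact pullback.lift_snd _ _ _

/-- components of `G2` on morphisms -/
lemma G2_map_left_fst (adjD : SigD ⊣ Dstar) (adj : L ⊣ R) (ov : L ⋙ SigD ≅ Over.forget X)
    (W : D) {Y Y' : D} (k : Y ⟶ Y') :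
    ((G2 adjD adj ov W).map k).left ≫ pullback.fst (terminal.from Y') (terminal.from W) =
      pullback.fst (terminal.from Y) (terminal.from W) ≫ k := by
  simp [G2, equivOverTerminal, toOverTerminal, pullback.lift_fst]

lemma G2_map_left_snd (adjD : SigD ⊣ Dstar) (adj : L ⊣ R) (ov : L ⋙ SigD ≅ Over.forget X)
    (W : D) {Y Y' : D} (k : Y ⟶ Y') :
    ((G2 adjD adj ov W).map k).left ≫ pullback.snd (terminal.from Y') (terminal.from W) =
      pullback.snd (terminal.from Y) (terminal.from W) := by
  simp [G2, equivOverTerminal, toOverTerminal, pullback.lift_snd]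

lemma Lam_map_left (adjD : SigD ⊣ Dstar) (adj : L ⊣ R) (ov : L ⋙ SigD ≅ Over.forget X)
    (W : D) {B B' : Over X} (h : B ⟶ B') :
    ((Over.pullback (R.obj W).hom ⋙ Lam adjD adj ov W).map h).left =
      L.map (zmap adjD adj ov W h) := rfl

/-- The Frobenius square: the canonical natural isomorphism
`(pullback along (R W).hom) ⋙ Λ ≅ L ⋙ G₂`. -/
noncomputable def delta (adjD : SigD ⊣ Dstar) (adj : L ⊣ R) (ov : L ⋙ SigD ≅ Over.forget X)
    (W : D) (frob : FrobeniusAt adj (Dstar.obj X)) :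
    Over.pullback (R.obj W).hom ⋙ Lam adjD adj ov W ≅ L ⋙ G2 adjD adj ov W :=
  NatIso.ofComponents
    (fun B => Over.isoMk (phi adjD adj ov W frob B) (phi_snd adjD adj ov W frob B))
    (fun {B B'} h => by
      apply Over.OverMorphism.ext
      rw [Over.comp_left, Over.comp_left]
      rw [Lam_map_left adjD adj ov W h]
      show L.map (zmap adjD adj ov W h) ≫ (phi adjD adj ov W frob B').hom =
        (phi adjD adj ov W frob B).hom ≫ ((G2 adjD adj ov W).map (L.map h)).left
      apply pullback.hom_ext
      · simp only [Category.assoc]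
        erw [phi_fst, Category.assoc, G2_map_left_fst, ← Category.assoc, phi_fst,
          ← L.map_comp, ← L.map_comp, zmap_aB]
      · simp only [Category.assoc]
        erw [phi_snd, Category.assoc, G2_map_left_snd, phi_snd, ← Category.assoc, ← L.map_comp, zmap_sB])

/-- compatibility of `parallelPair` with post-composition by a functor -/
noncomputable def ppComp {A : Type u₁} [Category.{v₁} A] {B : Type u₂} [Category.{v₂} B]
    (F : A ⥤ B) {X₁ X₂ : A} (u v : X₁ ⟶ X₂) :
    parallelPair u v ⋙ F ≅ parallelPair (F.map u) (F.map v) :=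
  NatIso.ofComponents (fun j => by cases j <;> exact Iso.refl _)
    (by rintro _ _ ⟨⟩ <;> simp

)

section Assembly

lemma L_conservative (ov : L ⋙ SigD ≅ Over.forget X) {B B' : Over X} (h : B ⟶ B') (hh : IsIso (L.map h)) : IsIso h := by
  have h1 : IsIso (SigD.map (L.map h)) := inferInstance
  have h2 : IsIso ((Over.forget X).map h) := by
    rw [← NatIso.isIso_map_iff ov h]
    exact h1
  exact overIsIso h h2

lemma Lam_reflectsIso (adjD : SigD ⊣ Dstar) (adj : L ⊣ R) (ov : L ⋙ SigD ≅ Over.forget X) (W : D) : (Lam adjD adj ov W).ReflectsIsomorphisms := by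
  constructor
  intro V₁ V₂ m hm
  have h1 : IsIso ((Lam adjD adj ov W).map m).left :=
    inferInstanceAs (IsIso ((Over.forget W).map ((Lam adjD adj ov W).map m)))
  have h2 : IsIso (L.map (((R.obj W).iteratedSliceBackward.map m).left)) := h1
  have h3 : IsIso (((R.obj W).iteratedSliceBackward.map m).left) :=
    L_conservative ov _ h2
  have h4 : IsIso ((R.obj W).iteratedSliceBackward.map m) := overIsIso _ h3
  haveI : ((R.obj W).iteratedSliceBackward).IsEquivalence :=
    inferInstanceAs (((R.obj W).iteratedSliceEquiv.inverse).IsEquivalence)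
  exact isIso_of_reflects_iso m ((R.obj W).iteratedSliceBackward)

lemma G_reflectsIso (adjD : SigD ⊣ Dstar) (adj : L ⊣ R) (ov : L ⋙ SigD ≅ Over.forget X) (W : D) (frob : FrobeniusAt adj (Dstar.obj X))
    [MonadicRightAdjoint (Over.pullback (terminal.from W))] :
    (Over.pullback (R.obj W).hom).ReflectsIsomorphisms := by
  constructor
  intro B B' h hh
  have h1 : IsIso ((Over.pullback (R.obj W).hom ⋙ Lam adjD adj ov W).map h) :=
    inferInstanceAs (IsIso ((Lam adjD adj ov W).map ((Over.pullback (R.obj W).hom).map h)))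
  rw [NatIso.isIso_map_iff (delta adjD adj ov W frob) h] at h1
  have h2 : IsIso ((Over.pullback (terminal.from W)).map
      ((equivOverTerminal D).functor.map (L.map h))) := h1
  haveI := monadicReflectsIsos (Over.pullback (terminal.from W))
  have h3 : IsIso ((equivOverTerminal D).functor.map (L.map h)) :=
    isIso_of_reflects_iso _ (Over.pullback (terminal.from W))
  have h4 : IsIso (L.map h) :=
    inferInstanceAs (IsIso ((Over.forget (⊤_ D)).map ((equivOverTerminal D).functor.map (L.map h))))
  exact L_conservative ov h h4

lemma splitG2 (adjD : SigD ⊣ Dstar) (adj : L ⊣ R) (ov : L ⋙ SigD ≅ Over.forget X) (W : D)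
    (frob : FrobeniusAt adj (Dstar.obj X))
    {B₁ B₂ : Over X} (u v : B₁ ⟶ B₂) [hsp : HasSplitCoequalizer ((Over.pullback (R.obj W).hom).map u)
      ((Over.pullback (R.obj W).hom).map v)] :
    HasSplitCoequalizer ((L ⋙ G2 adjD adj ov W).map u) ((L ⋙ G2 adjD adj ov W).map v) := by
  haveI h1 : HasSplitCoequalizer ((Over.pullback (R.obj W).hom ⋙ Lam adjD adj ov W).map u)
      ((Over.pullback (R.obj W).hom ⋙ Lam adjD adj ov W).map v) :=
    inferInstanceAs (HasSplitCoequalizer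
      ((Lam adjD adj ov W).map ((Over.pullback (R.obj W).hom).map u))
      ((Lam adjD adj ov W).map ((Over.pullback (R.obj W).hom).map v)))
  exact hasSplitCoequalizer_of_natIso (delta adjD adj ov W frob) u v

lemma hasCoeqL (adjD : SigD ⊣ Dstar) (adj : L ⊣ R) (ov : L ⋙ SigD ≅ Over.forget X) (W : D)
    (frob : FrobeniusAt adj (Dstar.obj X))
    [MonadicRightAdjoint (Over.pullback (terminal.from W))]
    {B₁ B₂ : Over X} (u v : B₁ ⟶ B₂) [hsp : HasSplitCoequalizer ((Over.pullback (R.obj W).hom).map u)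
      ((Over.pullback (R.obj W).hom).map v)] :
    HasCoequalizer (L.map u) (L.map v) := by
  haveI h2 := splitG2 adjD adj ov W frob u v
  haveI h3 : (Over.pullback (terminal.from W)).IsSplitPair
      ((equivOverTerminal D).functor.map (L.map u))
      ((equivOverTerminal D).functor.map (L.map v)) :=
    inferInstanceAs (HasSplitCoequalizer
      ((L ⋙ G2 adjD adj ov W).map u) ((L ⋙ G2 adjD adj ov W).map v))
  haveI c4 : CreatesColimit (parallelPair ((equivOverTerminal D).functor.map (L.map u))
      ((equivOverTerminal D).functor.map (L.map v))) (Over.pullback (terminal.from W)) :=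
    Monad.createsGSplitCoequalizersOfMonadic (G := Over.pullback (terminal.from W))
      (f := (equivOverTerminal D).functor.map (L.map u))
      (g := (equivOverTerminal D).functor.map (L.map v))
  haveI c5 : HasColimit (parallelPair ((equivOverTerminal D).functor.map (L.map u))
      ((equivOverTerminal D).functor.map (L.map v)) ⋙ Over.pullback (terminal.from W)) :=
    hasColimit_of_iso (ppComp (Over.pullback (terminal.from W)) _ _)
  haveI c6 : HasCoequalizer ((equivOverTerminal D).functor.map (L.map u))
      ((equivOverTerminal D).functor.map (L.map v)) :=
    hasColimit_of_created (parallelPair _ _) (Over.pullback (terminal.from W))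
  letI : PreservesColimitsOfSize.{0, 0} (Over.forget (⊤_ D)) :=
    (equivOverTerminal D).symm.toAdjunction.leftAdjoint_preservesColimits
  haveI c7 : HasColimit (parallelPair ((equivOverTerminal D).functor.map (L.map u))
      ((equivOverTerminal D).functor.map (L.map v)) ⋙ Over.forget (⊤_ D)) :=
    HasColimit.mk ⟨_, isColimitOfPreserves (Over.forget _) (colimit.isColimit _)⟩
  exact hasColimit_of_iso
    ((ppComp (Over.forget (⊤_ D)) ((equivOverTerminal D).functor.map (L.map u))
      ((equivOverTerminal D).functor.map (L.map v))).symm)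

lemma hasCoeqUV (adjD : SigD ⊣ Dstar) (adj : L ⊣ R) (ov : L ⋙ SigD ≅ Over.forget X) (W : D)
    (frob : FrobeniusAt adj (Dstar.obj X))
    [MonadicRightAdjoint (Over.pullback (terminal.from W))]
    {B₁ B₂ : Over X} (u v : B₁ ⟶ B₂) [hsp : HasSplitCoequalizer ((Over.pullback (R.obj W).hom).map u)
      ((Over.pullback (R.obj W).hom).map v)] :
    HasCoequalizer u v := by
  haveI := hasCoeqL adjD adj ov W frob u v
  letI := adjD.leftAdjoint_preservesColimits
  haveI hD : HasColimit (parallelPair (L.map u) (L.map v) ⋙ SigD) :=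
    HasColimit.mk ⟨_, isColimitOfPreserves SigD (colimit.isColimit _)⟩
  have e2 : parallelPair u v ⋙ Over.forget X ≅ parallelPair (L.map u) (L.map v) ⋙ SigD :=
    (Functor.isoWhiskerLeft (parallelPair u v) ov).symm ≪≫ (Functor.associator _ _ _).symm ≪≫
      Functor.isoWhiskerRight (ppComp L u v) SigD
  haveI : HasColimit (parallelPair u v ⋙ Over.forget X) := hasColimit_of_iso e2
  exact hasColimit_of_created (parallelPair u v) (Over.forget X)

lemma presUV (adjD : SigD ⊣ Dstar) (adj : L ⊣ R) (ov : L ⋙ SigD ≅ Over.forget X) (W : D)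
    (frob : FrobeniusAt adj (Dstar.obj X))
    [MonadicRightAdjoint (Over.pullback (terminal.from W))]
    {B₁ B₂ : Over X} (u v : B₁ ⟶ B₂) [hsp : HasSplitCoequalizer ((Over.pullback (R.obj W).hom).map u)
      ((Over.pullback (R.obj W).hom).map v)] :
    PreservesColimit (parallelPair u v) (Over.pullback (R.obj W).hom) := by
  haveI := hasCoeqUV adjD adj ov W frob u v
  letI := adj.leftAdjoint_preservesColimits
  letI : PreservesColimitsOfSize.{0, 0} (equivOverTerminal D).functor :=
    (equivOverTerminal D).toAdjunction.leftAdjoint_preservesColimits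
  apply preservesColimit_of_preserves_colimit_cocone (colimit.isColimit (parallelPair u v))
  have tL : IsColimit (L.mapCocone (colimit.cocone (parallelPair u v))) :=
    isColimitOfPreserves L (colimit.isColimit _)
  have t1 : IsColimit ((equivOverTerminal D).functor.mapCocone
      (L.mapCocone (colimit.cocone (parallelPair u v)))) := isColimitOfPreserves _ tL
  -- instances for preservation by `Over.pullback (terminal.from W)`
  haveI h2 := splitG2 adjD adj ov W frob u v
  haveI h3 : (Over.pullback (terminal.from W)).IsSplitPair
      ((equivOverTerminal D).functor.map (L.map u))
      ((equivOverTerminal D).functor.map (L.map v)) :=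
    inferInstanceAs (HasSplitCoequalizer
      ((L ⋙ G2 adjD adj ov W).map u) ((L ⋙ G2 adjD adj ov W).map v))
  haveI c4 : CreatesColimit (parallelPair ((equivOverTerminal D).functor.map (L.map u))
      ((equivOverTerminal D).functor.map (L.map v))) (Over.pullback (terminal.from W)) :=
    Monad.createsGSplitCoequalizersOfMonadic (G := Over.pullback (terminal.from W))
      (f := (equivOverTerminal D).functor.map (L.map u))
      (g := (equivOverTerminal D).functor.map (L.map v))
  haveI c5 : HasColimit (parallelPair ((equivOverTerminal D).functor.map (L.map u))
      ((equivOverTerminal D).functor.map (L.map v)) ⋙ Over.pullback (terminal.from W)) :=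
    hasColimit_of_iso (ppComp (Over.pullback (terminal.from W)) _ _)
  haveI c8 : PreservesColimit (parallelPair ((equivOverTerminal D).functor.map (L.map u))
      ((equivOverTerminal D).functor.map (L.map v))) (Over.pullback (terminal.from W)) :=
    preservesColimit_of_createsColimit_and_hasColimit _ _
  haveI c9 : PreservesColimit ((parallelPair u v ⋙ L) ⋙ (equivOverTerminal D).functor)
      (Over.pullback (terminal.from W)) :=
    preservesColimit_of_iso_diagram _
      ((Functor.isoWhiskerRight (ppComp L u v) (equivOverTerminal D).functor ≪≫
        ppComp (equivOverTerminal D).functor (L.map u) (L.map v)).symm)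
  have t2 : IsColimit ((Over.pullback (terminal.from W)).mapCocone
      ((equivOverTerminal D).functor.mapCocone
        (L.mapCocone (colimit.cocone (parallelPair u v))))) := isColimitOfPreserves _ t1
  have t2' : IsColimit ((L ⋙ G2 adjD adj ov W).mapCocone (colimit.cocone (parallelPair u v))) := t2
  have t3 : IsColimit ((Over.pullback (R.obj W).hom ⋙ Lam adjD adj ov W).mapCocone
      (colimit.cocone (parallelPair u v))) :=
    IsColimit.mapCoconeEquiv (delta adjD adj ov W frob).symm t2'
  -- reflect along Lam
  haveI := Lam_reflectsIso adjD adj ov W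
  haveI : HasColimit (parallelPair u v ⋙ Over.pullback (R.obj W).hom) :=
    hasColimit_of_iso (ppComp (Over.pullback (R.obj W).hom) u v)
  haveI : PreservesColimit (parallelPair u v ⋙ Over.pullback (R.obj W).hom)
      (Lam adjD adj ov W) :=
    preservesColimit_of_iso_diagram _ (ppComp (Over.pullback (R.obj W).hom) u v).symm
  haveI := reflectsColimit_of_reflectsIsomorphisms
    (parallelPair u v ⋙ Over.pullback (R.obj W).hom) (Lam adjD adj ov W)
  exact isColimitOfReflects (Lam adjD adj ov W) t3

theorem mainResult (adjD : SigD ⊣ Dstar) (adj : L ⊣ R) (ov : L ⋙ SigD ≅ Over.forget X)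
    (W : D) (frob : FrobeniusAt adj (Dstar.obj X))
    (hW : Nonempty (MonadicRightAdjoint (Over.pullback (terminal.from W)))) :
    Nonempty (MonadicRightAdjoint (Over.pullback (R.obj W).hom)) := by
  obtain ⟨hWi⟩ := hW
  haveI := hWi
  haveI h1 : Monad.HasCoequalizerOfIsSplitPair (Over.pullback (R.obj W).hom) :=
    ⟨fun u v hsp => by haveI := hsp; exact hasCoeqUV adjD adj ov W frob u v⟩
  haveI h2 : Monad.PreservesColimitOfIsSplitPair (Over.pullback (R.obj W).hom) :=
    ⟨fun u v hsp => by haveI := hsp; exact presUV adjD adj ov W frob u v⟩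
  haveI h3 : Monad.ReflectsColimitOfIsSplitPair (Over.pullback (R.obj W).hom) :=
    ⟨fun u v hsp => by
      haveI := hsp
      haveI := hasCoeqUV adjD adj ov W frob u v
      haveI := presUV adjD adj ov W frob u v
      haveI := G_reflectsIso adjD adj ov W frob
      exact reflectsColimit_of_reflectsIsomorphisms _ _⟩
  exact ⟨Monad.monadicOfHasPreservesReflectsGSplitCoequalizers
    (Over.mapPullbackAdj (R.obj W).hom)⟩

end Assembly


end Main

end FrobeniusDescentInternal


/-- If `L ⊣ R` (with `L : C/X ⥤ D`) is over `C` (i.e. `Σ_D ∘ L ≅ Σ_X`) and is Frobenius at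
`D*(X)`, and `!_W : W ⟶ 1` is an effective descent morphism of `D`, then the structure morphism
of `R W` (a morphism into `X` in `C`) is an effective descent morphism of `C`. -/
theorem effectiveDescent_structure_of_frobeniusAt
    {C : Type u₁} [Category.{v₁} C] {D : Type u₂} [Category.{v₂} D]
    [HasFiniteLimits C] [HasFiniteLimits D]
    {SigD : D ⥤ C} {Dstar : C ⥤ D} (adjD : SigD ⊣ Dstar) (X : C)
    {L : Over X ⥤ D} {R : D ⥤ Over X} (adj : L ⊣ R)
    (hover : L ⋙ SigD ≅ Over.forget X)
    (frob : FrobeniusAt adj (Dstar.obj X))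
    (W : D) (hW : EffectiveDescentMorphism (terminal.from W)) :
    EffectiveDescentMorphism ((R.obj W).hom) :=
  FrobeniusDescentInternal.mainResult adjD adj hover W frob hW
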